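/- arXiv:math/0408347 — 3 statements merged into one kernel-verified Lean document; each statement's English description precedes it below -/
import Mathlib

section
/- Under the hypotheses of the previous lemma, for every s ∈ [0,1] one has 0 ≤ s·l − d(x₀, c(s·l)) < ε and |d(x₀, γ(s·d(x₀,x₁))) − d(x₀, c(s·l))| < 2ε. -/
open Metric Filter Topology Set

noncomputable section

variable {X : Type*} [MetricSpace X]

/-- A unit-speed geodesic ray (parametrized on `[0, ∞)`). -/
def IsRay (γ : ℝ → X) : Prop :=
  ∀ ⦃s t : ℝ⦄, 0 ≤ s → 0 ≤ t → dist (γ s) (γ t) = |s - t|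

/-- Two rays are asymptotic: their pointwise distance is uniformly bounded. -/
def Asymp (γ σ : ℝ → X) : Prop :=
  ∃ C : ℝ, ∀ t : ℝ, 0 ≤ t → dist (γ t) (σ t) ≤ C

/-- A unit-speed minimizing geodesic from `x` to `y`, parametrized on `[0, dist x y]`. -/
def IsMinGeodesic (γ : ℝ → X) (x y : X) : Prop :=
  γ 0 = x ∧ γ (dist x y) = y ∧
    ∀ ⦃s t : ℝ⦄, s ∈ Set.Icc 0 (dist x y) → t ∈ Set.Icc 0 (dist x y) →
      dist (γ s) (γ t) = |s - t|

/-- Every pair of points is joined by a minimizing geodesic. -/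
def GeodesicSpace (X : Type*) [MetricSpace X] : Prop :=
  ∀ x y : X, ∃ γ : ℝ → X, IsMinGeodesic γ x y

/-- CAT(0): geodesic and satisfying the CN (Bruhat–Tits) inequality. -/
def IsCAT0 (X : Type*) [MetricSpace X] : Prop :=
  GeodesicSpace X ∧
    ∀ p q r m : X, dist q m = dist q r / 2 → dist m r = dist q r / 2 →
      dist p m ^ 2 ≤ (dist p q ^ 2 + dist p r ^ 2) / 2 - dist q r ^ 2 / 4

/-- A function convex along every minimizing geodesic. -/
def ConvexFun (F : X → ℝ) : Prop :=
  ∀ (x y : X) (γ : ℝ → X), IsMinGeodesic γ x y →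
    ConvexOn ℝ (Set.Icc 0 (dist x y)) (F ∘ γ)

/-- Euclidean comparison angle at `p` of the points `x`, `y`. -/
def compAngle (p x y : X) : ℝ :=
  Real.arccos ((dist p x ^ 2 + dist p y ^ 2 - dist x y ^ 2) / (2 * dist p x * dist p y))

/-- The (upper) angle at `p` between two curves emanating from `p`. -/
def angleAt (p : X) (γ σ : ℝ → X) : ℝ :=
  sInf {θ : ℝ | ∃ δ : ℝ, 0 < δ ∧
    θ = sSup {θ' : ℝ | ∃ s t : ℝ, s ∈ Set.Ioc 0 δ ∧ t ∈ Set.Ioc 0 δ ∧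
      θ' = compAngle p (γ s) (σ t)}}

/-- A unit-speed geodesic of length `ℓ` emanating from `p` (a direction at `p`). -/
def UnitGeodFrom (p : X) (γ : ℝ → X) (ℓ : ℝ) : Prop :=
  0 < ℓ ∧ γ 0 = p ∧
    ∀ ⦃s t : ℝ⦄, s ∈ Set.Icc 0 ℓ → t ∈ Set.Icc 0 ℓ → dist (γ s) (γ t) = |s - t|

/-- Intrinsic (angular) distance on the unit sphere of `ℝ³`. -/
def sdist (x y : EuclideanSpace ℝ (Fin 3)) : ℝ := Real.arccos (inner ℝ x y)

/-- CAT(1): points at distance < π are joined by geodesics, and geodesic triangles of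
perimeter < 2π satisfy comparison with triangles in the unit 2-sphere. -/
def IsCAT1 (Y : Type*) [MetricSpace Y] : Prop :=
  (∀ x y : Y, dist x y < Real.pi → ∃ γ : ℝ → Y, IsMinGeodesic γ x y) ∧
    ∀ (p q r : Y) (γ : ℝ → Y), IsMinGeodesic γ q r →
      dist p q + dist q r + dist r p < 2 * Real.pi →
      ∃ p' q' r' : EuclideanSpace ℝ (Fin 3), ‖p'‖ = 1 ∧ ‖q'‖ = 1 ∧ ‖r'‖ = 1 ∧
        sdist p' q' = dist p q ∧ sdist q' r' = dist q r ∧ sdist r' p' = dist r p ∧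
        ∀ t ∈ Set.Icc (0:ℝ) (dist q r), ∀ x' : EuclideanSpace ℝ (Fin 3), ‖x'‖ = 1 →
          sdist q' x' = t → sdist x' r' = dist q r - t → dist p (γ t) ≤ sdist p' x'

/-- Covering dimension ≤ n: every open cover has an open refinement of order ≤ n+1. -/
def CovDimLE (Y : Type*) [TopologicalSpace Y] (n : ℕ) : Prop :=
  ∀ U : Set (Set Y), (∀ u ∈ U, IsOpen u) → ⋃₀ U = Set.univ →
    ∃ V : Set (Set Y), (∀ v ∈ V, IsOpen v) ∧ ⋃₀ V = Set.univ ∧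
      (∀ v ∈ V, ∃ u ∈ U, v ⊆ u) ∧
      ∀ x : Y, {v ∈ V | x ∈ v}.Finite ∧ {v ∈ V | x ∈ v}.ncard ≤ n + 1

/-- Directional derivative of `F` at `p` along the geodesic `γ` (of length `ℓ`) from `p`;
for a convex `F` the difference quotients are monotone, so the limit is the infimum. -/
def dirDeriv (F : X → ℝ) (p : X) (γ : ℝ → X) (ℓ : ℝ) : ℝ :=
  sInf {r : ℝ | ∃ s ∈ Set.Ioc 0 ℓ, r = (F (γ s) - F p) / s}

/-- Busemann function of the ray `γ`; `t ↦ dist p (γ t) - t` is non-increasing, so the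
limit as `t → ∞` is the infimum. -/
def busemann (γ : ℝ → X) (p : X) : ℝ :=
  sInf {r : ℝ | ∃ t : ℝ, 0 ≤ t ∧ r = dist p (γ t) - t}

/-- Compactness of the space of directions `Σ_p X` (sequential total boundedness of
geodesic directions at `p` in the angle metric). -/
def DirCompact (p : X) : Prop :=
  ∀ (γ : ℕ → ℝ → X) (ℓ : ℕ → ℝ), (∀ n, UnitGeodFrom p (γ n) (ℓ n)) →
    ∃ φ : ℕ → ℕ, StrictMono φ ∧
      ∀ ε : ℝ, 0 < ε → ∃ N : ℕ, ∀ m ≥ N, ∀ n ≥ N,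
        angleAt p (γ (φ m)) (γ (φ n)) < ε

/-- The angle metric between ideal points represented by the rays `γ`, `σ`:
the supremum over basepoints `p` of the angle at `p` between the representatives from `p`. -/
def idealAngle (γ σ : ℝ → X) : ℝ :=
  sSup {θ : ℝ | ∃ (p : X) (γ' σ' : ℝ → X), IsRay γ' ∧ IsRay σ' ∧ γ' 0 = p ∧ σ' 0 = p ∧
    Asymp γ' γ ∧ Asymp σ' σ ∧ θ = angleAt p γ' σ'}

/-- The radius of a subset `A` of a metric space. -/
def setRadius {B : Type*} [MetricSpace B] (A : Set B) : ℝ :=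
  ⨅ x : A, ⨆ y : A, dist (x : B) (y : B)

/-- The set of centers of `A` (points of `A` realizing the radius). -/
def centersIn {B : Type*} [MetricSpace B] (A : Set B) : Set B :=
  {x | x ∈ A ∧ (⨆ y : A, dist x (y : B)) = setRadius A}

/-- The fixed point set of an isometry `f` in the ideal boundary `B` (with class map `cls`). -/
def FixedAtInfinity {X B : Type*} [MetricSpace X] (f : X → X) (cls : (ℝ → X) → B) : Set B :=
  {b | ∃ γ : ℝ → X, IsRay γ ∧ cls γ = b ∧ Asymp (f ∘ γ) γ}

end

/-- Intermediate estimates in the proof of Lemma 5.6. -/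
theorem stmt1 {Y : Type*} [MetricSpace Y] (l ε : ℝ) (hl0 : 0 ≤ l) (hε : 0 < ε)
    (c : ℝ → Y) (x₀ x₁ : Y) (hc : LipschitzOnWith 1 c (Set.Icc 0 l))
    (hc0 : c 0 = x₀) (hc1 : c l = x₁) (hl : l < dist x₀ x₁ + ε)
    (γ : ℝ → Y) (hγ : IsMinGeodesic γ x₀ x₁) :
    ∀ s ∈ Set.Icc (0:ℝ) 1,
      0 ≤ s * l - dist x₀ (c (s * l)) ∧ s * l - dist x₀ (c (s * l)) < ε ∧
      |dist x₀ (γ (s * dist x₀ x₁)) - dist x₀ (c (s * l))| < 2 * ε := by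
  intro s hs
  obtain ⟨hs0, hs1⟩ := hs
  set d := dist x₀ x₁ with hd
  have hd0 : 0 ≤ d := dist_nonneg
  have hsl0 : 0 ≤ s * l := mul_nonneg hs0 hl0
  have hsll : s * l ≤ l := by nlinarith
  have hmemsl : s * l ∈ Set.Icc (0:ℝ) l := ⟨hsl0, hsll⟩
  have hmem0 : (0:ℝ) ∈ Set.Icc (0:ℝ) l := ⟨le_refl _, hl0⟩
  have hmeml : l ∈ Set.Icc (0:ℝ) l := ⟨hl0, le_refl _⟩
  have hA : dist x₀ (c (s * l)) ≤ s * l := by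
    have := hc.dist_le_mul 0 hmem0 (s * l) hmemsl
    simpa [hc0, Real.dist_eq, abs_of_nonneg hsl0] using this
  have hdl : d ≤ l := by
    have := hc.dist_le_mul 0 hmem0 l hmeml
    simpa [hc0, hc1, hd, Real.dist_eq, abs_of_nonneg hl0] using this
  have hB : d ≤ dist x₀ (c (s * l)) + (l - s * l) := by
    have h1 : dist x₀ x₁ ≤ dist x₀ (c (s * l)) + dist (c (s * l)) x₁ := dist_triangle _ _ _
    have h2 : dist (c (s * l)) x₁ ≤ l - s * l := by
      have := hc.dist_le_mul (s * l) hmemsl l hmeml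
      simpa [hc1, Real.dist_eq, abs_of_nonpos (by linarith : s * l - l ≤ 0)] using this
    linarith
  have hgeo : dist x₀ (γ (s * d)) = s * d := by
    obtain ⟨h0, h1, hiso⟩ := hγ
    have hsd : s * d ∈ Set.Icc (0:ℝ) d := ⟨mul_nonneg hs0 hd0, by nlinarith⟩
    have := hiso ⟨le_refl _, hd0⟩ hsd
    rw [h0] at this
    rw [this, abs_of_nonpos (by nlinarith : (0:ℝ) - s * d ≤ 0)]
    ring
  refine ⟨by linarith, by nlinarith, ?_⟩
  rw [hgeo, abs_lt]
  constructor <;> nlinarith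
end

section
/- Let f be an isometry of a complete CAT(0) space X and let d_f(p) = d(p, f(p)) be its displacement function. For a ray γ in X, the point γ(∞) is d_f-monotone if and only if f∘γ is asymptotic to γ. Consequently X_{d_f}(∞) = X_f(∞), the fixed point set of f in the ideal boundary. -/
open Metric Filter Topology Set

/-- The ideal boundary of `X` as asymptotic classes of rays. -/
def RayBoundary (X : Type*) [MetricSpace X] :=
  Quot (fun γ σ : {γ : ℝ → X // IsRay γ} => Asymp γ.1 σ.1)

/-- For an isometry `f`, a ray's ideal point is `d_f`-monotone iff `f ∘ γ` is asymptotic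
to `γ`; consequently the `d_f`-monotone set equals the fixed point set of `f` at infinity. -/
theorem stmt9 {X : Type*} [MetricSpace X] [CompleteSpace X] (hX : IsCAT0 X)
    (f : X → X) (hf : Isometry f) (hfsurj : Function.Surjective f) :
    (∀ γ : ℝ → X, IsRay γ →
      (AntitoneOn (fun t => dist (γ t) (f (γ t))) (Set.Ici 0) ↔ Asymp (f ∘ γ) γ)) ∧
    {x : RayBoundary X | ∃ g : {γ : ℝ → X // IsRay γ},
        Quot.mk _ g = x ∧ AntitoneOn (fun t => dist (g.1 t) (f (g.1 t))) (Set.Ici 0)} =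
      {x : RayBoundary X | ∃ g : {γ : ℝ → X // IsRay γ},
        Quot.mk _ g = x ∧ Asymp (f ∘ g.1) g.1} := by
  have key : ∀ γ : ℝ → X, IsRay γ →
      (AntitoneOn (fun t => dist (γ t) (f (γ t))) (Set.Ici 0) ↔ Asymp (f ∘ γ) γ) := by
    intro γ hγ
    constructor
    · intro h
      refine ⟨dist (γ 0) (f (γ 0)), fun t ht => ?_⟩
      have := h (Set.self_mem_Ici) (Set.mem_Ici.mpr ht) ht
      simpa [Function.comp, dist_comm] using this
    · rintro ⟨C, hC⟩
      -- the two-CN "midpoints of two sides" lemma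
      have lem : ∀ p q r m m1 : X, dist q m = dist q r / 2 → dist m r = dist q r / 2 →
          dist q m1 = dist q p / 2 → dist m1 p = dist q p / 2 →
          dist m m1 ≤ dist p r / 2 := by
        intro p q r m m1 hqm hmr hqm1 hm1p
        have h1 := hX.2 p q r m hqm hmr
        have h2 := hX.2 m q p m1 hqm1 hm1p
        have e1 : dist m q = dist q r / 2 := by rw [dist_comm]; exact hqm
        have e2 : dist m p = dist p m := dist_comm m p
        have e3 : dist q p = dist p q := dist_comm q p
        rw [e1, e2, e3] at h2
        have hsq : dist m m1 ^ 2 ≤ (dist p r / 2) ^ 2 := by nlinarith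
        have := Real.sqrt_le_sqrt hsq
        rwa [Real.sqrt_sq dist_nonneg, Real.sqrt_sq (by positivity)] at this
      -- midpoint convexity of the displacement along the ray
      have mid : ∀ a b : ℝ, 0 ≤ a → a ≤ b →
          dist (γ ((a + b) / 2)) (f (γ ((a + b) / 2))) ≤
            (dist (γ a) (f (γ a)) + dist (γ b) (f (γ b))) / 2 := by
        intro a b ha hab
        have hb : 0 ≤ b := ha.trans hab
        have hmidmem : 0 ≤ (a + b) / 2 := by linarith
        obtain ⟨σ, hσ0, hσ1, hσd⟩ := hX.1 (γ a) (f (γ b))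
        set D := dist (γ a) (f (γ b)) with hD
        have hD0 : 0 ≤ D := dist_nonneg
        set m := σ (D / 2) with hm
        set m1 := γ ((a + b) / 2) with hm1
        have hmemD : D / 2 ∈ Set.Icc (0 : ℝ) D := ⟨by linarith, by linarith⟩
        have hmem0 : (0 : ℝ) ∈ Set.Icc (0 : ℝ) D := ⟨le_rfl, hD0⟩
        have hmem1 : D ∈ Set.Icc (0 : ℝ) D := ⟨hD0, le_rfl⟩
        have hqm : dist (γ a) m = D / 2 := by
          have := hσd hmem0 hmemD
          rw [hσ0] at this
          rw [this]; rw [abs_of_nonpos (by linarith)]; ring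
        have hmr : dist m (f (γ b)) = D / 2 := by
          have := hσd hmemD hmem1
          rw [hσ1] at this
          rw [this]; rw [abs_of_nonpos (by linarith)]; ring
        have hab' : dist (γ a) (γ b) = b - a := by
          rw [hγ ha hb, abs_of_nonpos (by linarith)]; ring
        have ham1 : dist (γ a) m1 = (b - a) / 2 := by
          rw [hm1, hγ ha hmidmem, abs_of_nonpos (by linarith)]; ring
        have hm1b : dist m1 (γ b) = (b - a) / 2 := by
          rw [hm1, hγ hmidmem hb, abs_of_nonpos (by linarith)]; ring
        -- first application: p = γ b
        have A1 : dist m m1 ≤ dist (γ b) (f (γ b)) / 2 := by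
          refine lem (γ b) (γ a) (f (γ b)) m m1 hqm hmr ?_ ?_
          · rw [ham1, hab']
          · rw [hm1b, hab']
        -- second application: q = f (γ b), r = γ a, p = f (γ a), midpoint f m1
        have A2 : dist m (f m1) ≤ dist (f (γ a)) (γ a) / 2 := by
          have hq'r' : dist (f (γ b)) (γ a) = D := dist_comm _ _
          refine lem (f (γ a)) (f (γ b)) (γ a) m (f m1) ?_ ?_ ?_ ?_
          · rw [dist_comm (f (γ b)) m, hmr, hq'r']
          · rw [dist_comm m (γ a), hqm, hq'r']
          · rw [hf.dist_eq, hf.dist_eq, dist_comm (γ b) m1, hm1b,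
              dist_comm (γ b) (γ a), hab']
          · rw [hf.dist_eq, dist_comm m1 (γ a), ham1, hf.dist_eq,
              dist_comm (γ b) (γ a), hab']
        calc dist m1 (f m1) ≤ dist m1 m + dist m (f m1) := dist_triangle _ _ _
          _ ≤ dist (γ b) (f (γ b)) / 2 + dist (f (γ a)) (γ a) / 2 := by
              rw [dist_comm m1 m]; exact add_le_add A1 A2
          _ = (dist (γ a) (f (γ a)) + dist (γ b) (f (γ b))) / 2 := by
              rw [dist_comm (f (γ a)) (γ a)]; ring
      -- boundedness
      have hbd : ∀ t : ℝ, 0 ≤ t → dist (γ t) (f (γ t)) ≤ C := by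
        intro t ht
        have := hC t ht
        simpa [Function.comp, dist_comm] using this
      -- conclude antitone
      intro s hs t ht hst
      by_contra hcon
      push_neg at hcon
      set g : ℝ → ℝ := fun u => dist (γ u) (f (γ u)) with hg
      have hs' : (0 : ℝ) ≤ s := hs
      set δ : ℝ := g t - g s with hδ
      have hδ0 : 0 < δ := by simp only [hδ]; linarith [hcon]
      set h : ℝ := t - s with hh
      have hh0 : 0 ≤ h := by simp only [hh]; linarith [hst]
      have step : ∀ n : ℕ, g (s + (n + 1) * h) - g (s + n * h) ≥ δ := by
        intro n
        induction n with
        | zero =>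
          simp only [Nat.cast_zero, zero_add, one_mul, zero_mul, add_zero]
          have : s + h = t := by simp [hh]
          rw [this]
        | succ n ih =>
          have h1 : (0 : ℝ) ≤ s + n * h := by positivity
          have h2 : s + n * h ≤ s + (n + 2) * h := by nlinarith
          have := mid (s + n * h) (s + (n + 2) * h) h1 h2
          rw [show (s + n * h + (s + (n + 2) * h)) / 2 = s + (n + 1) * h by ring] at this
          have : g (s + (n + 1) * h) ≤ (g (s + n * h) + g (s + (n + 2) * h)) / 2 := this
          push_cast
          push_cast at ih this
          rw [show s + ((n : ℝ) + 1 + 1) * h = s + ((n : ℝ) + 2) * h by ring]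
          linarith
      have grow : ∀ n : ℕ, g (s + n * h) ≥ g s + n * δ := by
        intro n
        induction n with
        | zero => simp
        | succ n ih =>
          have := step n
          push_cast
          push_cast at ih this
          linarith
      obtain ⟨n, hn⟩ := exists_nat_gt ((C - g s) / δ)
      have h1 : (0 : ℝ) ≤ s + n * h := by positivity
      have h2 := hbd (s + n * h) h1
      have h3 := grow n
      have h4 : (C - g s) / δ * δ < n * δ := by
        exact mul_lt_mul_of_pos_right hn hδ0
      rw [div_mul_cancel₀ _ (ne_of_gt hδ0)] at h4
      simp only [hg] at h3 h2
      linarith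
  refine ⟨key, ?_⟩
  ext x
  simp only [Set.mem_setOf_eq]
  constructor
  · rintro ⟨g, hgx, hg⟩
    exact ⟨g, hgx, (key g.1 g.2).mp hg⟩
  · rintro ⟨g, hgx, hg⟩
    exact ⟨g, hgx, (key g.1 g.2).mpr hg⟩
end

section
/- Let X be a complete CAT(0) space, γ a ray in X with Busemann function b_γ, p ∈ X, and v ∈ Σ_p X. Then D_p b_γ(v) = −cos∠_p(γ̇_{pγ(∞)}(0), v), where γ_{pγ(∞)} is the unique ray from p asymptotic to γ. -/
open Metric Filter Topology Set

/-! ### auxiliary lemmas -/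

section Aux
variable {X : Type*} [MetricSpace X]

lemma busSet_nonempty (γ : ℝ → X) (x : X) :
    {r : ℝ | ∃ t : ℝ, 0 ≤ t ∧ r = dist x (γ t) - t}.Nonempty :=
  ⟨dist x (γ 0) - 0, 0, le_refl _, rfl⟩

lemma busSet_bddBelow {γ : ℝ → X} (hγ : IsRay γ) (x : X) :
    BddBelow {r : ℝ | ∃ t : ℝ, 0 ≤ t ∧ r = dist x (γ t) - t} := by
  refine ⟨-dist x (γ 0), ?_⟩
  rintro r ⟨t, ht, rfl⟩
  have h1 : dist (γ 0) (γ t) = t := by rw [hγ le_rfl ht]; rw [abs_of_nonpos (by linarith)]; ring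
  have h2 : dist (γ 0) (γ t) ≤ dist (γ 0) x + dist x (γ t) := dist_triangle _ _ _
  rw [dist_comm (γ 0) x] at h2
  linarith [h1 ▸ h2]

lemma busemann_le {γ : ℝ → X} (hγ : IsRay γ) (x : X) {t : ℝ} (ht : 0 ≤ t) :
    busemann γ x ≤ dist x (γ t) - t :=
  csInf_le (busSet_bddBelow hγ x) ⟨t, ht, rfl⟩

lemma busTerm_antitone {γ : ℝ → X} (hγ : IsRay γ) (x : X) {t T : ℝ}
    (ht : 0 ≤ t) (htT : t ≤ T) :
    dist x (γ T) - T ≤ dist x (γ t) - t := by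
  have h1 : dist (γ t) (γ T) = T - t := by
    rw [hγ ht (le_trans ht htT), abs_of_nonpos (by linarith)]; ring
  have h2 := dist_triangle x (γ t) (γ T)
  linarith [h1 ▸ h2]

lemma le_busemann {γ : ℝ → X} (x : X) (c : ℝ)
    (h : ∀ t : ℝ, 0 ≤ t → c ≤ dist x (γ t) - t) : c ≤ busemann γ x :=
  le_csInf (busSet_nonempty γ x) (by rintro r ⟨t, ht, rfl⟩; exact h t ht)

lemma busemann_lip {γ : ℝ → X} (hγ : IsRay γ) (x y : X) :
    busemann γ x ≤ busemann γ y + dist x y := by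
  have : busemann γ x - dist x y ≤ busemann γ y := by
    apply le_csInf (busSet_nonempty γ y)
    rintro r ⟨t, ht, rfl⟩
    have := busemann_le hγ x ht
    have htri := dist_triangle x y (γ t)
    linarith
  linarith

/-- for any `ε > 0` the busemann infimum is achieved up to `ε` uniformly for large times -/
lemma busemann_exists {γ : ℝ → X} (hγ : IsRay γ) (x : X) {ε : ℝ} (hε : 0 < ε) :
    ∃ T₀ : ℝ, 0 ≤ T₀ ∧ ∀ T, T₀ ≤ T → dist x (γ T) - T ≤ busemann γ x + ε := by
  obtain ⟨r, ⟨t, ht, rfl⟩, hlt⟩ :=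
    exists_lt_of_csInf_lt (busSet_nonempty γ x) (lt_add_of_pos_right (busemann γ x) hε)
  exact ⟨t, ht, fun T hT => le_trans (busTerm_antitone hγ x ht hT) hlt.le⟩

end Aux
lemma abs_cos_sub_cos_le (a b : ℝ) : |Real.cos a - Real.cos b| ≤ |a - b| := by
  rw [Real.cos_sub_cos]
  calc |(-2) * Real.sin ((a + b) / 2) * Real.sin ((a - b) / 2)|
      = 2 * |Real.sin ((a + b) / 2)| * |Real.sin ((a - b) / 2)| := by
        rw [abs_mul, abs_mul]; norm_num
    _ ≤ 2 * 1 * |(a - b) / 2| := by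
        apply mul_le_mul
        · exact mul_le_mul_of_nonneg_left (Real.abs_sin_le_one _) (by norm_num)
        · exact Real.abs_sin_le_abs
        · positivity
        · norm_num
    _ = |a - b| := by rw [abs_div]; norm_num; ring

lemma arccos_antitone {x y : ℝ} (h : x ≤ y) : Real.arccos y ≤ Real.arccos x := by
  unfold Real.arccos
  have := Real.monotone_arcsin h
  linarith

lemma midpoint_zero_ends {g : ℝ → ℝ} {r K : ℝ} (hr : 0 < r) (hK : 0 ≤ K)
    (hmc : ∀ x ∈ Set.Icc (0:ℝ) r, ∀ y ∈ Set.Icc (0:ℝ) r, g ((x + y) / 2) ≤ (g x + g y) / 2)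
    (hlip : ∀ x ∈ Set.Icc (0:ℝ) r, ∀ y ∈ Set.Icc (0:ℝ) r, |g x - g y| ≤ K * |x - y|)
    (hg0 : g 0 = 0) (hgr : g r = 0)
    {t : ℝ} (ht : t ∈ Set.Icc (0:ℝ) r) : g t ≤ 0 := by
  have hdy : ∀ n : ℕ, ∀ k : ℕ, k ≤ 2 ^ n → g (k * r / 2 ^ n) ≤ 0 := by
    intro n
    induction n with
    | zero =>
      intro k hk
      interval_cases k
      · simpa using hg0.le
      · simpa using hgr.le
    | succ n ih =>
      intro k hk
      have hmem : ∀ m : ℕ, m ≤ 2 ^ n → ((m:ℝ) * r / 2 ^ n) ∈ Set.Icc (0:ℝ) r := by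
        intro m hm
        constructor
        · positivity
        · rw [div_le_iff₀ (by positivity)]
          have : (m:ℝ) ≤ 2 ^ n := by exact_mod_cast hm
          nlinarith
      rcases Nat.even_or_odd k with ⟨j, hj⟩ | ⟨j, hj⟩
      · have hj2 : j ≤ 2 ^ n := by omega
        have heq : (k:ℝ) * r / 2 ^ (n + 1) = j * r / 2 ^ n := by
          subst hj; push_cast; ring
        rw [heq]; exact ih j hj2
      · have hj2 : j + 1 ≤ 2 ^ n := by omega
        have h1 := hmc _ (hmem j (by omega)) _ (hmem (j+1) hj2)
        have heq : (((j:ℝ) * r / 2 ^ n) + (((j:ℕ)+1 : ℕ) * r / 2 ^ n)) / 2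
            = (k:ℝ) * r / 2 ^ (n + 1) := by
          subst hj; push_cast; ring
        rw [heq] at h1
        have i1 := ih j (by omega)
        have i2 := ih (j+1) hj2
        linarith
  -- approximation by dyadic points
  have key : ∀ ε : ℝ, 0 < ε → g t ≤ ε := by
    intro ε hε
    obtain ⟨n, hn⟩ := pow_unbounded_of_one_lt (K * r / ε) (one_lt_two (α := ℝ))
    have hp : (0:ℝ) < 2 ^ n := by positivity
    set k : ℕ := ⌊t * 2 ^ n / r⌋₊ with hkdef
    have htnn : 0 ≤ t * 2 ^ n / r := div_nonneg (mul_nonneg ht.1 hp.le) hr.le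
    have htr : t * 2 ^ n / r ≤ ((2 ^ n : ℕ) : ℝ) := by
      push_cast
      rw [div_le_iff₀ hr]
      nlinarith [ht.2]
    have hk2 : k ≤ 2 ^ n := Nat.floor_le_of_le htr
    have hfl : (k:ℝ) ≤ t * 2 ^ n / r := Nat.floor_le htnn
    have hfl2 : t * 2 ^ n / r < (k:ℝ) + 1 := Nat.lt_floor_add_one _
    have hklow : (k:ℝ) * r / 2 ^ n ≤ t := by
      rw [div_le_iff₀ hp]
      rw [le_div_iff₀ hr] at hfl
      nlinarith
    have hkhigh : t - (k:ℝ) * r / 2 ^ n ≤ r / 2 ^ n := by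
      rw [div_lt_iff₀ hr] at hfl2
      rw [sub_le_iff_le_add, ← add_div, le_div_iff₀ hp]
      nlinarith
    have hmemk : (k:ℝ) * r / 2 ^ n ∈ Set.Icc (0:ℝ) r :=
      ⟨by positivity, le_trans hklow ht.2⟩
    have h1 := hlip t ht _ hmemk
    have habs : |t - (k:ℝ) * r / 2 ^ n| = t - (k:ℝ) * r / 2 ^ n :=
      abs_of_nonneg (by linarith)
    have h2 : g t - g ((k:ℝ) * r / 2 ^ n) ≤ K * (r / 2 ^ n) := by
      calc g t - g ((k:ℝ) * r / 2 ^ n) ≤ |g t - g ((k:ℝ) * r / 2 ^ n)| := le_abs_self _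
        _ ≤ K * |t - (k:ℝ) * r / 2 ^ n| := h1
        _ ≤ K * (r / 2 ^ n) := by
            rw [habs]; exact mul_le_mul_of_nonneg_left hkhigh hK
    have h3 := hdy n k hk2
    have h4 : K * (r / 2 ^ n) ≤ ε := by
      rw [div_lt_iff₀ hε] at hn
      rw [mul_div_assoc', div_le_iff₀ hp]
      nlinarith
    linarith
  by_contra h
  push_neg at h
  have := key (g t / 2) (by linarith)
  linarith

/-- midpoint-convex + Lipschitz implies the chord inequality -/
lemma midpoint_chord {f : ℝ → ℝ} {r K : ℝ} (hr : 0 < r) (hK : 0 ≤ K)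
    (hmc : ∀ x ∈ Set.Icc (0:ℝ) r, ∀ y ∈ Set.Icc (0:ℝ) r, f ((x + y) / 2) ≤ (f x + f y) / 2)
    (hlip : ∀ x ∈ Set.Icc (0:ℝ) r, ∀ y ∈ Set.Icc (0:ℝ) r, |f x - f y| ≤ K * |x - y|)
    {t : ℝ} (ht : t ∈ Set.Icc (0:ℝ) r) :
    f t ≤ (1 - t / r) * f 0 + (t / r) * f r := by
  have main : (fun s => f s - ((1 - s / r) * f 0 + (s / r) * f r)) t ≤ 0 := by
    apply midpoint_zero_ends hr (K := K + |f r - f 0| / r) (by positivity) ?_ ?_ ?_ ?_ ht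
    · intro x hx y hy
      have := hmc x hx y hy
      have haff : (1 - ((x + y)/2) / r) * f 0 + (((x + y)/2) / r) * f r
          = (((1 - x / r) * f 0 + (x / r) * f r) + ((1 - y / r) * f 0 + (y / r) * f r)) / 2 := by
        field_simp; ring
      rw [haff]
      linarith
    · intro x hx y hy
      have h1 := hlip x hx y hy
      have h2 : ((1 - x / r) * f 0 + (x / r) * f r) - ((1 - y / r) * f 0 + (y / r) * f r)
          = (f r - f 0) / r * (x - y) := by field_simp; ring
      calc |f x - ((1 - x / r) * f 0 + (x / r) * f r)
            - (f y - ((1 - y / r) * f 0 + (y / r) * f r))|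
          = |(f x - f y) - ((f r - f 0) / r * (x - y))| := by rw [← h2]; ring_nf
        _ ≤ |f x - f y| + |(f r - f 0) / r * (x - y)| := abs_sub _ _
        _ ≤ K * |x - y| + (|f r - f 0| / r) * |x - y| := by
            apply add_le_add h1
            rw [abs_mul, abs_div, abs_of_pos hr]
        _ = (K + |f r - f 0| / r) * |x - y| := by ring
    · simp
    · rw [div_self hr.ne']
      ring_nf
    -- done
  simp only at main
  linarith

lemma mc_bounded_le_init {f : ℝ → ℝ} {C : ℝ}
    (hmc : ∀ x : ℝ, 0 ≤ x → ∀ y : ℝ, 0 ≤ y → f ((x + y) / 2) ≤ (f x + f y) / 2)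
    (hbd : ∀ x : ℝ, 0 ≤ x → f x ≤ C) {u : ℝ} (hu : 0 ≤ u) : f u ≤ f 0 := by
  have key : ∀ n : ℕ, f 0 + 2 ^ n * (f u - f 0) ≤ f (2 ^ n * u) := by
    intro n
    induction n with
    | zero => norm_num
    | succ n ih =>
      have h1 := hmc 0 le_rfl (2 ^ (n+1) * u) (by positivity)
      have heq : ((0:ℝ) + 2 ^ (n+1) * u) / 2 = 2 ^ n * u := by ring
      rw [heq] at h1
      have h2 : f 0 + 2 ^ (n+1) * (f u - f 0) = f 0 + 2 * (2 ^ n * (f u - f 0)) := by ring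
      rw [h2]
      linarith
  by_contra h
  push_neg at h
  obtain ⟨n, hn⟩ := pow_unbounded_of_one_lt ((C - f 0) / (f u - f 0)) (one_lt_two (α := ℝ))
  have h1 := key n
  have h2 := hbd (2 ^ n * u) (by positivity)
  rw [div_lt_iff₀ (by linarith)] at hn
  linarith

/-! ### CAT(0) geometry -/

section Geom
variable {X : Type*} [MetricSpace X]

lemma dist_param {c : ℝ → X} {L : ℝ}
    (hc : ∀ ⦃s t : ℝ⦄, s ∈ Icc (0:ℝ) L → t ∈ Icc (0:ℝ) L → dist (c s) (c t) = |s - t|)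
    {s : ℝ} (hs : s ∈ Icc (0:ℝ) L) : dist (c 0) (c s) = s := by
  rw [hc (left_mem_Icc.2 (le_trans hs.1 hs.2)) hs, abs_of_nonpos (by linarith [hs.1])]
  ring

/-- CN inequality: midpoint convexity of `dist q (c ·)^2 - ·^2` along unit-speed geodesics -/
lemma cn_mid (hX : IsCAT0 X) {c : ℝ → X} {L : ℝ}
    (hc : ∀ ⦃s t : ℝ⦄, s ∈ Icc (0:ℝ) L → t ∈ Icc (0:ℝ) L → dist (c s) (c t) = |s - t|)
    (q : X) {u₁ u₂ : ℝ} (h1 : u₁ ∈ Icc (0:ℝ) L) (h2 : u₂ ∈ Icc (0:ℝ) L) :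
    dist q (c ((u₁ + u₂) / 2)) ^ 2 - ((u₁ + u₂) / 2) ^ 2
      ≤ ((dist q (c u₁) ^ 2 - u₁ ^ 2) + (dist q (c u₂) ^ 2 - u₂ ^ 2)) / 2 := by
  have hm : (u₁ + u₂) / 2 ∈ Icc (0:ℝ) L := ⟨by linarith [h1.1, h2.1], by linarith [h1.2, h2.2]⟩
  have e0 : dist (c u₁) (c u₂) = |u₁ - u₂| := hc h1 h2
  have e1 : dist (c u₁) (c ((u₁ + u₂) / 2)) = dist (c u₁) (c u₂) / 2 := by
    rw [hc h1 hm, e0]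
    rw [show u₁ - (u₁ + u₂) / 2 = (u₁ - u₂) / 2 by ring, abs_div]
    norm_num
  have e2 : dist (c ((u₁ + u₂) / 2)) (c u₂) = dist (c u₁) (c u₂) / 2 := by
    rw [hc hm h2, e0]
    rw [show (u₁ + u₂) / 2 - u₂ = (u₁ - u₂) / 2 by ring, abs_div]
    norm_num
  have hcn := hX.2 q (c u₁) (c u₂) (c ((u₁ + u₂) / 2)) e1 e2
  rw [e0] at hcn
  have : |u₁ - u₂| ^ 2 = (u₁ - u₂) ^ 2 := sq_abs _
  nlinarith [hcn]

/-- CN inequality: midpoint convexity of the distance itself -/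
lemma cn_mid_dist (hX : IsCAT0 X) {x y m : X} (q : X)
    (h1 : dist x m = dist x y / 2) (h2 : dist m y = dist x y / 2) :
    dist q m ≤ (dist q x + dist q y) / 2 := by
  have hcn := hX.2 q x y m h1 h2
  have habs : |dist x q - dist y q| ≤ dist x y := abs_dist_sub_le x y q
  have hsq : (dist x q - dist y q) ^ 2 ≤ dist x y ^ 2 := by
    calc (dist x q - dist y q) ^ 2 = |dist x q - dist y q| ^ 2 := (sq_abs _).symm
      _ ≤ dist x y ^ 2 := pow_le_pow_left₀ (abs_nonneg _) habs 2
  rw [dist_comm x q, dist_comm y q] at hsq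
  nlinarith [dist_nonneg (α := X) (x := q) (y := m),
    dist_nonneg (α := X) (x := q) (y := x), dist_nonneg (α := X) (x := q) (y := y)]

/-- slope inequality for `dist q (c ·)^2 - ·^2` -/
lemma dist_sq_slope (hX : IsCAT0 X) {c : ℝ → X} {L : ℝ}
    (hc : ∀ ⦃s t : ℝ⦄, s ∈ Icc (0:ℝ) L → t ∈ Icc (0:ℝ) L → dist (c s) (c t) = |s - t|)
    (q : X) {u U : ℝ} (hu : 0 < u) (huU : u ≤ U) (hUL : U ≤ L) :
    (dist q (c u) ^ 2 - u ^ 2 - dist q (c 0) ^ 2) / u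
      ≤ (dist q (c U) ^ 2 - U ^ 2 - dist q (c 0) ^ 2) / U := by
  have hU : 0 < U := lt_of_lt_of_le hu huU
  have hL : 0 < L := lt_of_lt_of_le hU hUL
  have hsub : ∀ ⦃s : ℝ⦄, s ∈ Icc (0:ℝ) U → s ∈ Icc (0:ℝ) L := by
    rintro s ⟨a, b⟩; exact ⟨a, le_trans b hUL⟩
  have hd0 : (0:ℝ) ∈ Icc (0:ℝ) L := left_mem_Icc.2 hL.le
  have hdist_le : ∀ ⦃s : ℝ⦄, s ∈ Icc (0:ℝ) U → dist q (c s) ≤ dist q (c 0) + L := by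
    intro s hs
    have := dist_triangle q (c 0) (c s)
    rw [dist_param hc (hsub hs)] at this
    have : dist q (c s) ≤ dist q (c 0) + s := this
    have hsL : s ≤ L := le_trans hs.2 hUL
    linarith
  have chord := midpoint_chord (f := fun s => dist q (c s) ^ 2 - s ^ 2)
      (r := U) (K := 2 * dist q (c 0) + 4 * L) hU (by positivity) ?_ ?_
      (t := u) ⟨hu.le, huU⟩
  · have hexp : ((1 - u / U) * ((fun s => dist q (c s) ^ 2 - s ^ 2) 0)
        + (u / U) * ((fun s => dist q (c s) ^ 2 - s ^ 2) U)) * U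
        = (U - u) * (dist q (c 0) ^ 2) + u * (dist q (c U) ^ 2 - U ^ 2) := by
      field_simp
      ring
    rw [div_le_div_iff₀ hu hU]
    have := mul_le_mul_of_nonneg_right chord hU.le
    rw [hexp] at this
    nlinarith [this]
  · intro x hx y hy
    exact cn_mid hX hc q (hsub hx) (hsub hy)
  · intro x hx y hy
    have hxL := hsub hx
    have hyL := hsub hy
    have h1 : |dist q (c x) - dist q (c y)| ≤ |x - y| := by
      have := abs_dist_sub_le (c x) (c y) q
      rw [hc hxL hyL] at this
      rw [dist_comm q (c x), dist_comm q (c y)]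
      exact this
    have hx1 := hdist_le hx
    have hy1 := hdist_le hy
    have hxb : |x| ≤ L := by
      rw [abs_of_nonneg hx.1]; exact le_trans hx.2 hUL
    have hyb : |y| ≤ L := by
      rw [abs_of_nonneg hy.1]; exact le_trans hy.2 hUL
    have key : dist q (c x) ^ 2 - x ^ 2 - (dist q (c y) ^ 2 - y ^ 2)
        = (dist q (c x) - dist q (c y)) * (dist q (c x) + dist q (c y)) - (x - y) * (x + y) := by
      ring
    rw [key]
    calc |(dist q (c x) - dist q (c y)) * (dist q (c x) + dist q (c y)) - (x - y) * (x + y)|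
        ≤ |(dist q (c x) - dist q (c y)) * (dist q (c x) + dist q (c y))|
            + |(x - y) * (x + y)| := abs_sub _ _
      _ = |dist q (c x) - dist q (c y)| * |dist q (c x) + dist q (c y)|
            + |x - y| * |x + y| := by rw [abs_mul, abs_mul]
      _ ≤ |x - y| * (2 * dist q (c 0) + 2 * L) + |x - y| * (2 * L) := by
          apply add_le_add
          · apply mul_le_mul h1 ?_ (abs_nonneg _) (abs_nonneg _)
            rw [abs_of_nonneg (by positivity)]
            linarith
          · apply mul_le_mul_of_nonneg_left ?_ (abs_nonneg _)
            calc |x + y| ≤ |x| + |y| := abs_add_le _ _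
              _ ≤ 2 * L := by linarith
      _ = (2 * dist q (c 0) + 4 * L) * |x - y| := by ring

end Geom

/-! ### comparison angles -/

section Angles
variable {X : Type*} [MetricSpace X]

lemma arg_mem (p x y : X) (hx : 0 < dist p x) (hy : 0 < dist p y) :
    -1 ≤ (dist p x ^ 2 + dist p y ^ 2 - dist x y ^ 2) / (2 * dist p x * dist p y) ∧
    (dist p x ^ 2 + dist p y ^ 2 - dist x y ^ 2) / (2 * dist p x * dist p y) ≤ 1 := by
  have htri1 : dist x y ≤ dist p x + dist p y := by
    have := dist_triangle x p y
    rw [dist_comm x p] at this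
    linarith
  have htri2 : |dist p x - dist p y| ≤ dist x y := by
    have := abs_dist_sub_le x y p
    rw [dist_comm x p, dist_comm y p] at this
    exact this
  have hsq : (dist p x - dist p y) ^ 2 ≤ dist x y ^ 2 := by
    calc (dist p x - dist p y) ^ 2 = |dist p x - dist p y| ^ 2 := (sq_abs _).symm
      _ ≤ dist x y ^ 2 := pow_le_pow_left₀ (abs_nonneg _) htri2 2
  constructor
  · rw [le_div_iff₀ (by positivity)]
    nlinarith [dist_nonneg (α := X) (x := x) (y := y)]
  · rw [div_le_one (by positivity)]
    nlinarith

lemma cos_compAngle (p x y : X) (hx : 0 < dist p x) (hy : 0 < dist p y) :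
    Real.cos (compAngle p x y)
      = (dist p x ^ 2 + dist p y ^ 2 - dist x y ^ 2) / (2 * dist p x * dist p y) :=
  Real.cos_arccos (arg_mem p x y hx hy).1 (arg_mem p x y hx hy).2

lemma compAngle_nonneg (p x y : X) : 0 ≤ compAngle p x y := Real.arccos_nonneg _

lemma compAngle_le_pi (p x y : X) : compAngle p x y ≤ Real.pi := Real.arccos_le_pi _

lemma compAngle_comm (p x y : X) : compAngle p x y = compAngle p y x := by
  unfold compAngle
  rw [dist_comm x y]
  congr 1
  ring

/-- law of cosines (by definition of the comparison angle) -/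
lemma dist_sq_eq_cos (p x y : X) (hx : 0 < dist p x) (hy : 0 < dist p y) :
    dist x y ^ 2 = dist p x ^ 2 + dist p y ^ 2
      - 2 * dist p x * dist p y * Real.cos (compAngle p x y) := by
  rw [cos_compAngle p x y hx hy]
  field_simp
  ring

/-- first-variation-type inequality: `dist x y ≥ dist p y - dist p x * cos(angle)` -/
lemma dist_ge_cos (p x y : X) (hx : 0 < dist p x) (hy : 0 < dist p y) :
    dist p y - dist p x * Real.cos (compAngle p x y) ≤ dist x y := by
  have habs : |dist p y - dist x y| ≤ dist p x := abs_dist_sub_le p x y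
  have hsq : (dist p y - dist x y) ^ 2 ≤ dist p x ^ 2 := by
    calc (dist p y - dist x y) ^ 2 = |dist p y - dist x y| ^ 2 := (sq_abs _).symm
      _ ≤ dist p x ^ 2 := pow_le_pow_left₀ (abs_nonneg _) habs 2
  have hcos := dist_sq_eq_cos p x y hx hy
  nlinarith [mul_pos hx hy, dist_nonneg (α := X) (x := x) (y := y)]

/-- monotonicity of the comparison angle in the second point, along a geodesic from `p` -/
lemma compAngle_mono2 (hX : IsCAT0 X) {p : X} {c' : ℝ → X} {L' : ℝ}
    (hc' : ∀ ⦃s t : ℝ⦄, s ∈ Icc (0:ℝ) L' → t ∈ Icc (0:ℝ) L' → dist (c' s) (c' t) = |s - t|)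
    (hc'0 : c' 0 = p) (x : X) (hx : 0 < dist p x)
    {u' U' : ℝ} (h0 : 0 < u') (huU : u' ≤ U') (hU : U' ≤ L') :
    compAngle p x (c' u') ≤ compAngle p x (c' U') := by
  have hU' : 0 < U' := lt_of_lt_of_le h0 huU
  have hmu : u' ∈ Icc (0:ℝ) L' := ⟨h0.le, le_trans huU hU⟩
  have hmU : U' ∈ Icc (0:ℝ) L' := ⟨hU'.le, hU⟩
  have hdu : dist p (c' u') = u' := by rw [← hc'0]; exact dist_param hc' hmu
  have hdU : dist p (c' U') = U' := by rw [← hc'0]; exact dist_param hc' hmU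
  unfold compAngle
  rw [hdu, hdU]
  apply arccos_antitone
  -- slope inequality
  have hs := dist_sq_slope hX hc' x h0 huU hU
  rw [hc'0] at hs
  rw [dist_comm x p] at hs
  rw [div_le_div_iff₀ h0 hU'] at hs
  rw [div_le_div_iff₀ (by positivity) (by positivity)]
  rw [dist_comm x (c' u'), dist_comm x (c' U')] at hs ⊢
  nlinarith [mul_le_mul_of_nonneg_left hs (le_of_lt hx)]

/-- monotonicity of the comparison angle along two geodesics from `p` -/
lemma compAngle_mono (hX : IsCAT0 X) {p : X} {c c' : ℝ → X} {L L' : ℝ}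
    (hc : ∀ ⦃s t : ℝ⦄, s ∈ Icc (0:ℝ) L → t ∈ Icc (0:ℝ) L → dist (c s) (c t) = |s - t|)
    (hc0 : c 0 = p)
    (hc' : ∀ ⦃s t : ℝ⦄, s ∈ Icc (0:ℝ) L' → t ∈ Icc (0:ℝ) L' → dist (c' s) (c' t) = |s - t|)
    (hc'0 : c' 0 = p)
    {u U u' U' : ℝ} (hu : 0 < u) (huU : u ≤ U) (hUL : U ≤ L)
    (hu' : 0 < u') (huU' : u' ≤ U') (hUL' : U' ≤ L') :
    compAngle p (c u) (c' u') ≤ compAngle p (c U) (c' U') := by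
  have hdu : dist p (c u) = u := by
    rw [← hc0]; exact dist_param hc ⟨hu.le, le_trans huU hUL⟩
  have hdU' : dist p (c' U') = U' := by
    rw [← hc'0]; exact dist_param hc' ⟨(lt_of_lt_of_le hu' huU').le, hUL'⟩
  calc compAngle p (c u) (c' u')
      ≤ compAngle p (c u) (c' U') :=
        compAngle_mono2 hX hc' hc'0 (c u) (by rw [hdu]; exact hu) hu' huU' hUL'
    _ = compAngle p (c' U') (c u) := compAngle_comm _ _ _
    _ ≤ compAngle p (c' U') (c U) :=
        compAngle_mono2 hX hc hc0 (c' U')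
          (by rw [hdU']; exact lt_of_lt_of_le hu' huU') hu huU hUL
    _ = compAngle p (c U) (c' U') := compAngle_comm _ _ _

end Angles

/-! ### almost-on-geodesic estimate and calibration -/

section Calib
variable {X : Type*} [MetricSpace X]

/-- if `a` is nearly between `p` and `q` (up to `ε`), and `b` is a point exactly between
them at the same distance `t` from `p`, then `a` and `b` are close -/
lemma cs_aux (p1 q1 P Q : ℝ) :
    p1 * q1 * (P + Q) ^ 2 + (q1 * P - p1 * Q) ^ 2 = (p1 + q1) * (q1 * P ^ 2 + p1 * Q ^ 2) := by
  ring

lemma h6_aux {t r ε : ℝ} (ht : 0 ≤ t) (hr : 0 ≤ r) (hε : 0 ≤ ε) :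
    t * (r - t + ε) * (2 * r * ε + ε ^ 2) ≤ 2 * t * ε * (r + ε) ^ 2 := by
  have e : 2 * t * ε * (r + ε) ^ 2 - t * (r - t + ε) * (2 * r * ε + ε ^ 2)
      = t * ε ^ 2 * r + t * ε ^ 3 + 2 * t ^ 2 * r * ε + t ^ 2 * ε ^ 2 := by ring
  nlinarith [mul_nonneg (mul_nonneg ht (pow_nonneg hε 2)) hr,
    mul_nonneg ht (pow_nonneg hε 3),
    mul_nonneg (mul_nonneg (pow_nonneg ht 2) hr) hε,
    mul_nonneg (pow_nonneg ht 2) (pow_nonneg hε 2)]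

set_option maxHeartbeats 1000000 in
lemma near_geodesic (hX : IsCAT0 X) {p q a b : X} {t r ε : ℝ}
    (ht : 0 < t) (htr : t ≤ r) (hε : 0 < ε)
    (hpa : dist p a = t) (hpb : dist p b = t)
    (haq : dist a q ≤ r - t + ε) (hbq : dist b q = r - t)
    (hpq : dist p q = r) :
    dist a b ^ 2 ≤ 8 * t * ε := by
  obtain ⟨g, hg0, hgD, hgd⟩ := hX.1 a b
  set D : ℝ := dist a b with hD
  have hDnn : 0 ≤ D := dist_nonneg
  have hmem0 : (0:ℝ) ∈ Icc (0:ℝ) D := left_mem_Icc.2 hDnn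
  have hmemD : D ∈ Icc (0:ℝ) D := right_mem_Icc.2 hDnn
  have hmemh : D / 2 ∈ Icc (0:ℝ) D := ⟨by positivity, by linarith⟩
  have ham : dist a (g (D / 2)) = D / 2 := by
    rw [← hg0]
    rw [hgd hmem0 hmemh, abs_of_nonpos (by linarith)]
    ring
  have hmb : dist (g (D / 2)) b = D / 2 := by
    rw [← hgD]
    rw [hgd hmemh hmemD, abs_of_nonpos (by linarith)]
    ring
  have hcn1 := hX.2 p a b (g (D / 2)) ham hmb
  have hcn2 := hX.2 q a b (g (D / 2)) ham hmb
  rw [hpa, hpb] at hcn1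
  rw [dist_comm q b, hbq] at hcn2
  have htri := dist_triangle p (g (D / 2)) q
  rw [hpq] at htri
  set P : ℝ := dist p (g (D / 2)) with hP
  set Q : ℝ := dist (g (D / 2)) q with hQ
  have hPnn : 0 ≤ P := dist_nonneg
  have hQnn : 0 ≤ Q := dist_nonneg
  rw [dist_comm q (g (D / 2)), ← hQ] at hcn2
  have hqa : dist q a ≤ r - t + ε := by rw [dist_comm]; exact haq
  have hqann : 0 ≤ dist q a := dist_nonneg
  have hq1pos : (0:ℝ) < r - t + ε := by linarith
  have hq1 : dist q a ^ 2 ≤ (r - t + ε) ^ 2 := by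
    have := pow_le_pow_left₀ hqann hqa 2
    simpa using this
  have hQ2 : Q ^ 2 ≤ (r - t + ε) ^ 2 - D ^ 2 / 4 := by
    have h0 : (r - t) ^ 2 ≤ (r - t + ε) ^ 2 := by nlinarith
    linarith [hcn2]
  have hP2 : P ^ 2 ≤ t ^ 2 - D ^ 2 / 4 := by linarith [hcn1]
  have hrnn : (0:ℝ) ≤ r := hpq ▸ dist_nonneg
  -- Cauchy–Schwarz style certificate
  have h1 : t * (r - t + ε) * (P + Q) ^ 2
      ≤ (t + (r - t + ε)) * ((r - t + ε) * P ^ 2 + t * Q ^ 2) := by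
    have := cs_aux t (r - t + ε) P Q
    have hsq := sq_nonneg ((r - t + ε) * P - t * Q)
    linarith [this, hsq]
  have h2 : r ^ 2 ≤ (P + Q) ^ 2 := by
    have := pow_le_pow_left₀ hrnn htri 2
    simpa using this
  have h3 : (r - t + ε) * P ^ 2 + t * Q ^ 2
      ≤ (r - t + ε) * (t ^ 2 - D ^ 2 / 4) + t * ((r - t + ε) ^ 2 - D ^ 2 / 4) := by
    have k1 := mul_le_mul_of_nonneg_left hP2 hq1pos.le
    have k2 := mul_le_mul_of_nonneg_left hQ2 ht.le
    linarith
  have h4 : t * (r - t + ε) * r ^ 2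
      ≤ (t + (r - t + ε)) * ((r - t + ε) * (t ^ 2 - D ^ 2 / 4) + t * ((r - t + ε) ^ 2 - D ^ 2 / 4)) := by
    have ha : t * (r - t + ε) * r ^ 2 ≤ t * (r - t + ε) * (P + Q) ^ 2 :=
      mul_le_mul_of_nonneg_left h2 (mul_nonneg ht.le hq1pos.le)
    have hb := mul_le_mul_of_nonneg_left h3 (by linarith : (0:ℝ) ≤ t + (r - t + ε))
    linarith
  have e1 : (t + (r - t + ε)) * ((r - t + ε) * (t ^ 2 - D ^ 2 / 4) + t * ((r - t + ε) ^ 2 - D ^ 2 / 4))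
      = t * (r - t + ε) * (r + ε) ^ 2 - D ^ 2 / 4 * (r + ε) ^ 2 := by ring
  have e2 : t * (r - t + ε) * (r + ε) ^ 2 - t * (r - t + ε) * r ^ 2
      = t * (r - t + ε) * (2 * r * ε + ε ^ 2) := by ring
  have h5 : D ^ 2 / 4 * (r + ε) ^ 2 ≤ t * (r - t + ε) * (2 * r * ε + ε ^ 2) := by
    rw [e1] at h4
    linarith
  have h6 : t * (r - t + ε) * (2 * r * ε + ε ^ 2) ≤ 2 * t * ε * (r + ε) ^ 2 :=
    h6_aux ht.le hrnn hε.le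
  have h7 : D ^ 2 / 4 * (r + ε) ^ 2 ≤ 2 * t * ε * (r + ε) ^ 2 := le_trans h5 h6
  have h8 : (0:ℝ) < (r + ε) ^ 2 := by positivity
  have h9 : D ^ 2 / 4 ≤ 2 * t * ε := le_of_mul_le_mul_right h7 h8
  linarith
end Calib

section Calib2
variable {X : Type*} [MetricSpace X]

/-- busemann functions are midpoint-convex along geodesic rays -/
lemma busemann_mc {τ ρ : ℝ → X} (hτ : IsRay τ) (hX : IsCAT0 X) (hρ : IsRay ρ)
    {u₁ u₂ : ℝ} (h1 : 0 ≤ u₁) (h2 : 0 ≤ u₂) :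
    busemann τ (ρ ((u₁ + u₂) / 2)) ≤ (busemann τ (ρ u₁) + busemann τ (ρ u₂)) / 2 := by
  apply le_of_forall_pos_le_add
  intro ε hε
  obtain ⟨T₁, hT₁0, hT₁⟩ := busemann_exists hτ (ρ u₁) (half_pos hε)
  obtain ⟨T₂, hT₂0, hT₂⟩ := busemann_exists hτ (ρ u₂) (half_pos hε)
  set T := max T₁ T₂ with hT
  have hT0 : 0 ≤ T := le_trans hT₁0 (le_max_left _ _)
  have hm : 0 ≤ (u₁ + u₂) / 2 := by linarith
  -- midpoint distances along ρ
  have e0 : dist (ρ u₁) (ρ u₂) = |u₁ - u₂| := hρ h1 h2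
  have e1 : dist (ρ u₁) (ρ ((u₁ + u₂) / 2)) = dist (ρ u₁) (ρ u₂) / 2 := by
    rw [hρ h1 hm, e0, show u₁ - (u₁ + u₂) / 2 = (u₁ - u₂) / 2 by ring, abs_div]
    norm_num
  have e2 : dist (ρ ((u₁ + u₂) / 2)) (ρ u₂) = dist (ρ u₁) (ρ u₂) / 2 := by
    rw [hρ hm h2, e0, show (u₁ + u₂) / 2 - u₂ = (u₁ - u₂) / 2 by ring, abs_div]
    norm_num
  have hmid := cn_mid_dist hX (τ T) e1 e2
  have hle := busemann_le hτ (ρ ((u₁ + u₂) / 2)) hT0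
  have ht1 := hT₁ T (le_max_left _ _)
  have ht2 := hT₂ T (le_max_right _ _)
  have hd1 : dist (ρ ((u₁ + u₂) / 2)) (τ T) ≤ (dist (ρ u₁) (τ T) + dist (ρ u₂) (τ T)) / 2 := by
    rw [dist_comm (ρ ((u₁ + u₂) / 2)) (τ T), dist_comm (ρ u₁) (τ T), dist_comm (ρ u₂) (τ T)]
    exact hmid
  linarith

/-- the busemann function of `τ` decreases with unit speed along any ray asymptotic to `τ` -/
lemma busemann_calibrate (hX : IsCAT0 X) {ρ τ : ℝ → X} (hρ : IsRay ρ) (hτ : IsRay τ)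
    (h : Asymp ρ τ) {u : ℝ} (hu : 0 ≤ u) :
    busemann τ (ρ u) ≤ busemann τ (ρ 0) - u := by
  obtain ⟨C, hC⟩ := h
  -- f := busemann τ ∘ ρ + id is midpoint convex on [0,∞), bounded above, and ≥ f 0
  have key : (fun w : ℝ => busemann τ (ρ (max w 0)) + max w 0) u
      ≤ (fun w : ℝ => busemann τ (ρ (max w 0)) + max w 0) 0 := by
    refine mc_bounded_le_init (f := fun w : ℝ => busemann τ (ρ (max w 0)) + max w 0) (C := C) ?_ ?_ hu
    · intro x hx y hy
      simp only [max_eq_left hx, max_eq_left hy,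
        max_eq_left (by positivity : (0:ℝ) ≤ (x + y) / 2)]
      have := busemann_mc hτ hX hρ hx hy
      linarith
    · intro x hx
      simp only [max_eq_left hx]
      have h1 := busemann_le hτ (ρ x) hx
      have h2 : dist (ρ x) (τ x) ≤ C := hC x hx
      have h3 : dist (ρ x) (τ x) - x ≥ busemann τ (ρ x) := by
        calc busemann τ (ρ x) ≤ dist (ρ x) (τ x) - x := h1
          _ = dist (ρ x) (τ x) - x := rfl
      linarith
  simp only [max_eq_left hu, max_self] at key
  linarith

end Calib2

/-! ### the angle between two geodesics from a point -/

section AngleAt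
variable {X : Type*} [MetricSpace X]

lemma innerSet_nonempty (p : X) (c c' : ℝ → X) {δ : ℝ} (hδ : 0 < δ) :
    {θ' : ℝ | ∃ s t : ℝ, s ∈ Set.Ioc 0 δ ∧ t ∈ Set.Ioc 0 δ ∧
      θ' = compAngle p (c s) (c' t)}.Nonempty :=
  ⟨compAngle p (c δ) (c' δ), δ, δ, ⟨hδ, le_rfl⟩, ⟨hδ, le_rfl⟩, rfl⟩

lemma innerSet_bddAbove (p : X) (c c' : ℝ → X) (δ : ℝ) :
    BddAbove {θ' : ℝ | ∃ s t : ℝ, s ∈ Set.Ioc 0 δ ∧ t ∈ Set.Ioc 0 δ ∧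
      θ' = compAngle p (c s) (c' t)} := by
  refine ⟨Real.pi, ?_⟩
  rintro θ ⟨s, t, _, _, rfl⟩
  exact compAngle_le_pi p _ _

lemma outerSet_nonempty (p : X) (c c' : ℝ → X) :
    {θ : ℝ | ∃ δ : ℝ, 0 < δ ∧
      θ = sSup {θ' : ℝ | ∃ s t : ℝ, s ∈ Set.Ioc 0 δ ∧ t ∈ Set.Ioc 0 δ ∧
        θ' = compAngle p (c s) (c' t)}}.Nonempty :=
  ⟨_, 1, one_pos, rfl⟩

lemma outerSet_bddBelow (p : X) (c c' : ℝ → X) :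
    BddBelow {θ : ℝ | ∃ δ : ℝ, 0 < δ ∧
      θ = sSup {θ' : ℝ | ∃ s t : ℝ, s ∈ Set.Ioc 0 δ ∧ t ∈ Set.Ioc 0 δ ∧
        θ' = compAngle p (c s) (c' t)}} := by
  refine ⟨0, ?_⟩
  rintro θ ⟨δ, hδ, rfl⟩
  calc (0:ℝ) ≤ compAngle p (c δ) (c' δ) := compAngle_nonneg _ _ _
    _ ≤ _ := le_csSup (innerSet_bddAbove p c c' δ)
          ⟨δ, δ, ⟨hδ, le_rfl⟩, ⟨hδ, le_rfl⟩, rfl⟩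

lemma angleAt_nonneg (p : X) (c c' : ℝ → X) : 0 ≤ angleAt p c c' := by
  apply le_csInf (outerSet_nonempty p c c')
  rintro θ ⟨δ, hδ, rfl⟩
  calc (0:ℝ) ≤ compAngle p (c δ) (c' δ) := compAngle_nonneg _ _ _
    _ ≤ _ := le_csSup (innerSet_bddAbove p c c' δ)
          ⟨δ, δ, ⟨hδ, le_rfl⟩, ⟨hδ, le_rfl⟩, rfl⟩

lemma angleAt_le_pi (p : X) (c c' : ℝ → X) : angleAt p c c' ≤ Real.pi := by
  have h1 : sSup {θ' : ℝ | ∃ s t : ℝ, s ∈ Set.Ioc 0 1 ∧ t ∈ Set.Ioc 0 1 ∧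
      θ' = compAngle p (c s) (c' t)} ∈ {θ : ℝ | ∃ δ : ℝ, 0 < δ ∧
      θ = sSup {θ' : ℝ | ∃ s t : ℝ, s ∈ Set.Ioc 0 δ ∧ t ∈ Set.Ioc 0 δ ∧
        θ' = compAngle p (c s) (c' t)}} := ⟨1, one_pos, rfl⟩
  refine le_trans (csInf_le (outerSet_bddBelow p c c') h1) ?_
  apply csSup_le (innerSet_nonempty p c c' one_pos)
  rintro θ ⟨s, t, _, _, rfl⟩
  exact compAngle_le_pi p _ _

lemma angleAt_le_compAngle (hX : IsCAT0 X) {p : X} {c c' : ℝ → X} {L L' : ℝ}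
    (hc : ∀ ⦃s t : ℝ⦄, s ∈ Icc (0:ℝ) L → t ∈ Icc (0:ℝ) L → dist (c s) (c t) = |s - t|)
    (hc0 : c 0 = p)
    (hc' : ∀ ⦃s t : ℝ⦄, s ∈ Icc (0:ℝ) L' → t ∈ Icc (0:ℝ) L' → dist (c' s) (c' t) = |s - t|)
    (hc'0 : c' 0 = p)
    {s t : ℝ} (hs : 0 < s) (hsL : s ≤ L) (ht : 0 < t) (htL : t ≤ L') :
    angleAt p c c' ≤ compAngle p (c s) (c' t) := by
  have hδ : 0 < min s t := lt_min hs ht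
  have h1 : sSup {θ' : ℝ | ∃ a b : ℝ, a ∈ Set.Ioc 0 (min s t) ∧ b ∈ Set.Ioc 0 (min s t) ∧
      θ' = compAngle p (c a) (c' b)} ∈ {θ : ℝ | ∃ δ : ℝ, 0 < δ ∧
      θ = sSup {θ' : ℝ | ∃ a b : ℝ, a ∈ Set.Ioc 0 δ ∧ b ∈ Set.Ioc 0 δ ∧
        θ' = compAngle p (c a) (c' b)}} := ⟨min s t, hδ, rfl⟩
  refine le_trans (csInf_le (outerSet_bddBelow p c c') h1) ?_
  apply csSup_le (innerSet_nonempty p c c' hδ)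
  rintro θ ⟨a, b, ha, hb, rfl⟩
  exact compAngle_mono hX hc hc0 hc' hc'0 ha.1 (le_trans ha.2 (min_le_left _ _)) hsL
    hb.1 (le_trans hb.2 (min_le_right _ _)) htL

lemma angleAt_exists_delta (p : X) (c c' : ℝ → X) {ε : ℝ} (hε : 0 < ε) :
    ∃ δ : ℝ, 0 < δ ∧ ∃ θ : ℝ, angleAt p c c' ≤ θ ∧ θ < angleAt p c c' + ε ∧ θ ≤ Real.pi ∧
      ∀ s t : ℝ, s ∈ Set.Ioc 0 δ → t ∈ Set.Ioc 0 δ → compAngle p (c s) (c' t) ≤ θ := by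
  obtain ⟨θ, hθmem, hθlt⟩ := exists_lt_of_csInf_lt (outerSet_nonempty p c c')
    (show sInf _ < angleAt p c c' + ε from lt_add_of_pos_right _ hε)
  obtain ⟨δ, hδ, rfl⟩ := hθmem
  refine ⟨δ, hδ, _, csInf_le (outerSet_bddBelow p c c') ⟨δ, hδ, rfl⟩, hθlt, ?_, ?_⟩
  · apply csSup_le (innerSet_nonempty p c c' hδ)
    rintro θ' ⟨a, b, _, _, rfl⟩
    exact compAngle_le_pi p _ _
  · intro s t hs ht
    exact le_csSup (innerSet_bddAbove p c c' δ) ⟨s, t, hs, ht, rfl⟩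

end AngleAt

/-! ### main estimates -/

section Main
variable {X : Type*} [MetricSpace X]

lemma sqrt_aux {d s δ c : ℝ} (hd : 0 ≤ d) (hs : 0 < s) (hδ : 0 < δ) (hsδ : s ≤ δ)
    (hc1 : -1 ≤ c) (hc2 : c ≤ 1) (h : d ^ 2 ≤ s ^ 2 + δ ^ 2 - 2 * s * δ * c) :
    d ≤ δ - s * c + s ^ 2 / δ := by
  have hy : 0 ≤ δ - s * c + s ^ 2 / δ := by
    have h1 : s * c ≤ s := by nlinarith
    have h2 : 0 ≤ s ^ 2 / δ := by positivity
    linarith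
  have e : (δ - s * c + s ^ 2 / δ) ^ 2
      = (s ^ 2 + δ ^ 2 - 2 * s * δ * c) + ((s * c - s ^ 2 / δ) ^ 2 + s ^ 2) := by
    field_simp
    ring
  have hsq : d ^ 2 ≤ (δ - s * c + s ^ 2 / δ) ^ 2 := by
    nlinarith [sq_nonneg (s * c - s ^ 2 / δ), sq_nonneg s]
  nlinarith [hsq, hy, hd]

lemma upper_bound (hX : IsCAT0 X) {γ : ℝ → X} (hγ : IsRay γ) {p : X}
    {σ : ℝ → X} (hσ : IsRay σ) (hσ0 : σ 0 = p) (hσγ : Asymp σ γ)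
    {v : ℝ → X} {ℓ : ℝ} (hv : UnitGeodFrom p v ℓ) {ε : ℝ} (hε : 0 < ε) :
    ∃ δ₀ : ℝ, 0 < δ₀ ∧ ∀ s : ℝ, 0 < s → s < δ₀ →
      busemann γ (v s) ≤ busemann γ p + s * (-Real.cos (angleAt p σ v) + ε) := by
  obtain ⟨hℓ, hv0, hvd⟩ := hv
  obtain ⟨δ, hδ, θ, hαθ, hθα, hθπ, hsup⟩ := angleAt_exists_delta p σ v (half_pos hε)
  set δ' : ℝ := min δ ℓ with hδ'def
  have hδ' : 0 < δ' := lt_min hδ hℓ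
  refine ⟨min δ' (δ' * (ε / 2)), lt_min hδ' (by positivity), ?_⟩
  intro s hs0 hs1
  have hsδ' : s ≤ δ' := le_of_lt (lt_of_lt_of_le hs1 (min_le_left _ _))
  have hsε : s < δ' * (ε / 2) := lt_of_lt_of_le hs1 (min_le_right _ _)
  -- distances from p
  have hdvs : dist p (v s) = s := by
    rw [← hv0, hvd (left_mem_Icc.2 hℓ.le) ⟨hs0.le, le_trans hsδ' (min_le_right _ _)⟩,
      abs_of_nonpos (by linarith)]
    ring
  have hdσ : dist p (σ δ') = δ' := by
    rw [← hσ0, hσ le_rfl hδ'.le, abs_of_nonpos (by linarith)]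
    ring
  -- comparison angle bound
  have hcomp : compAngle p (σ δ') (v s) ≤ θ :=
    hsup δ' s ⟨hδ', min_le_left _ _⟩ ⟨hs0, le_trans hsδ' (min_le_left _ _)⟩
  have hcos : Real.cos θ ≤ Real.cos (compAngle p (σ δ') (v s)) :=
    Real.cos_le_cos_of_nonneg_of_le_pi (compAngle_nonneg _ _ _) hθπ hcomp
  -- law of cosines
  have hxpos : 0 < dist p (v s) := by rw [hdvs]; exact hs0
  have hypos : 0 < dist p (σ δ') := by rw [hdσ]; exact hδ'
  have hlaw := dist_sq_eq_cos p (v s) (σ δ') hxpos hypos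
  rw [hdvs, hdσ] at hlaw
  rw [compAngle_comm p (v s) (σ δ')] at hlaw
  have hsq : dist (v s) (σ δ') ^ 2 ≤ s ^ 2 + δ' ^ 2 - 2 * s * δ' * Real.cos θ := by
    have hmul : 2 * s * δ' * Real.cos θ ≤ 2 * s * δ' * Real.cos (compAngle p (σ δ') (v s)) :=
      mul_le_mul_of_nonneg_left hcos (by positivity)
    linarith [hlaw]
  have hcθ1 : -1 ≤ Real.cos θ := Real.neg_one_le_cos θ
  have hcθ2 : Real.cos θ ≤ 1 := Real.cos_le_one θ
  have hdle : dist (v s) (σ δ') ≤ δ' - s * Real.cos θ + s ^ 2 / δ' :=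
    sqrt_aux dist_nonneg hs0 hδ' hsδ' hcθ1 hcθ2 hsq
  -- busemann chain
  have hb1 : busemann γ (v s) ≤ busemann γ (σ δ') + dist (v s) (σ δ') :=
    busemann_lip hγ (v s) (σ δ')
  have hb2 : busemann γ (σ δ') ≤ busemann γ p - δ' := by
    have := busemann_calibrate hX hσ hγ hσγ hδ'.le
    rw [hσ0] at this
    exact this
  -- cosine comparison with the angle
  have hcosdiff : -Real.cos θ ≤ -Real.cos (angleAt p σ v) + ε / 2 := by
    have h1 := abs_cos_sub_cos_le θ (angleAt p σ v)
    have h2 : |θ - angleAt p σ v| = θ - angleAt p σ v := abs_of_nonneg (by linarith)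
    rw [h2] at h1
    have h3 := abs_le.1 h1
    linarith [h3.1, hθα]
  have hsdiv : s / δ' < ε / 2 := by
    rw [div_lt_iff₀ hδ']
    calc s < δ' * (ε / 2) := hsε
      _ = ε / 2 * δ' := by ring
  have hfin : δ' - s * Real.cos θ + s ^ 2 / δ' - δ'
      ≤ s * (-Real.cos (angleAt p σ v) + ε) := by
    have e1 : δ' - s * Real.cos θ + s ^ 2 / δ' - δ' = s * (-Real.cos θ + s / δ') := by
      field_simp
      ring
    rw [e1]
    apply mul_le_mul_of_nonneg_left ?_ hs0.le
    linarith
  linarith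
end Main

section Lower
variable {X : Type*} [MetricSpace X]

lemma A3_aux {d D w s ε : ℝ} (hs : 0 < s) (hw : 0 ≤ w) (hε : 0 < ε) (hε1 : ε ≤ 1)
    (h1 : d ≤ D + w) (h2 : D ≤ 2 * s) (h3 : d ≤ 2 * s) (h4 : w ≤ 2 * ε * s / 5)
    (h5 : 0 ≤ D) (h6 : 0 ≤ d) :
    d ^ 2 - D ^ 2 ≤ ε * (2 * s * s) := by
  nlinarith [mul_nonneg hw h5, mul_nonneg hw h6, mul_nonneg hw hw,
    mul_nonneg (mul_nonneg hε.le hs.le) hs.le, sq_nonneg (d - D),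
    mul_nonneg (mul_nonneg hε.le hε.le) (mul_nonneg hs.le hs.le)]

lemma lower_bound (hX : IsCAT0 X) {γ : ℝ → X} (hγ : IsRay γ) {p : X}
    {σ : ℝ → X} (hσ : IsRay σ) (hσ0 : σ 0 = p) (hσγ : Asymp σ γ)
    {v : ℝ → X} {ℓ : ℝ} (hv : UnitGeodFrom p v ℓ) {s : ℝ} (hs : 0 < s) (hsℓ : s ≤ ℓ) :
    busemann γ p - s * Real.cos (angleAt p σ v) ≤ busemann γ (v s) := by
  obtain ⟨hℓ, hv0, hvd⟩ := hv
  -- distances from p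
  have hdvs : dist p (v s) = s := by
    rw [← hv0, hvd (left_mem_Icc.2 hℓ.le) ⟨hs.le, hsℓ⟩, abs_of_nonpos (by linarith)]
    ring
  have hdσs : dist p (σ s) = s := by
    rw [← hσ0, hσ le_rfl hs.le, abs_of_nonpos (by linarith)]
    ring
  -- reduce to an ε-statement
  suffices h : ∀ ε : ℝ, 0 < ε → ε ≤ 1 →
      busemann γ p - s * (Real.cos (angleAt p σ v) + 2 * ε) ≤ busemann γ (v s) by
    apply le_of_forall_pos_le_add
    intro ε' hε'
    rcases le_or_gt (ε' / (2 * s)) 1 with hc | hc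
    · have := h (ε' / (2 * s)) (by positivity) hc
      have e1 : s * (Real.cos (angleAt p σ v) + 2 * (ε' / (2 * s)))
          = s * Real.cos (angleAt p σ v) + ε' := by field_simp
      rw [e1] at this
      linarith
    · have := h 1 one_pos le_rfl
      have h2s : 2 * s < ε' := by
        rw [lt_div_iff₀ (by positivity : (0:ℝ) < 2 * s)] at hc
        linarith
      linarith
  intro ε hε hε1
  -- parameters
  set ε₁ : ℝ := ε ^ 2 * s / 50 with hε₁def
  have hε₁ : 0 < ε₁ := by positivity
  -- calibration of σ into γ
  have hbσs : busemann γ (σ s) ≤ busemann γ p - s := by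
    have := busemann_calibrate hX hσ hγ hσγ hs.le
    rw [hσ0] at this
    exact this
  obtain ⟨T₀, hT₀0, hT₀⟩ := busemann_exists hγ (σ s) hε₁
  set Tstar : ℝ := max T₀ (s + dist (γ 0) p + 1) with hTdef
  have hTstar0 : 0 ≤ Tstar := le_trans hT₀0 (le_max_left _ _)
  -- main estimate for T ≥ Tstar
  have hmain : ∀ T : ℝ, Tstar ≤ T →
      busemann γ p - s * (Real.cos (angleAt p σ v) + 2 * ε) ≤ dist (v s) (γ T) - T := by
    intro T hT
    have hT0 : 0 ≤ T := le_trans hTstar0 hT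
    set r : ℝ := dist p (γ T) with hrdef
    have hbp : busemann γ p ≤ r - T := busemann_le hγ p hT0
    have hrT : T - dist (γ 0) p ≤ r := by
      have h1 : dist (γ 0) (γ T) = T := by
        rw [hγ le_rfl hT0, abs_of_nonpos (by linarith)]; ring
      have h2 := dist_triangle (γ 0) p (γ T)
      rw [h1] at h2
      linarith
    have hsr : s + 1 ≤ r := by
      have : s + dist (γ 0) p + 1 ≤ T := le_trans (le_max_right _ _) hT
      linarith
    have hrpos : 0 < r := by linarith
    -- geodesic from p to γ T
    obtain ⟨ζ, hζ0, hζr, hζd⟩ := hX.1 p (γ T)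
    rw [← hrdef] at hζr hζd
    have hsmem : s ∈ Icc (0:ℝ) r := ⟨hs.le, by linarith⟩
    have hdζs : dist p (ζ s) = s := by
      rw [← hζ0]
      rw [hζd (left_mem_Icc.2 hrpos.le) hsmem, abs_of_nonpos (by linarith)]
      ring
    have hdζγ : dist (ζ s) (γ T) = r - s := by
      rw [← hζr, hζd hsmem (right_mem_Icc.2 hrpos.le), abs_of_nonpos (by linarith)]
      ring
    -- calibration: σ s is nearly on [p, γ T]
    have hcal : dist (σ s) (γ T) ≤ r - s + ε₁ := by
      have h1 := hT₀ T (le_trans (le_max_left _ _) hT)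
      have h2 : dist (σ s) (γ T) ≤ T + busemann γ p - s + ε₁ := by linarith
      linarith
    -- near_geodesic
    have hw2 : dist (σ s) (ζ s) ^ 2 ≤ 8 * s * ε₁ :=
      near_geodesic hX hs (by linarith) hε₁ hdσs hdζs hcal hdζγ rfl
    have hwnn : 0 ≤ dist (σ s) (ζ s) := dist_nonneg
    have hw : dist (σ s) (ζ s) ≤ 2 * ε * s / 5 := by
      have h1 : 8 * s * ε₁ ≤ (2 * ε * s / 5) ^ 2 := by
        rw [hε₁def]
        nlinarith [sq_nonneg (ε * s)]
      have hBpos : (0:ℝ) < 2 * ε * s / 5 := by positivity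
      nlinarith [hw2, h1, hwnn, hBpos, sq_nonneg (dist (σ s) (ζ s) - 2 * ε * s / 5)]
    -- angle chain
    have hxpos : 0 < dist p (v s) := by rw [hdvs]; exact hs
    have hζpos : 0 < dist p (ζ s) := by rw [hdζs]; exact hs
    have hσpos : 0 < dist p (σ s) := by rw [hdσs]; exact hs
    have hrγpos : 0 < dist p (γ T) := hrpos
    -- A1 : compAngle p (v s) (ζ s) ≤ compAngle p (v s) (γ T)
    have hA1 : compAngle p (v s) (ζ s) ≤ compAngle p (v s) (γ T) := by
      have := compAngle_mono2 hX hζd hζ0 (v s) hxpos hs (by linarith : s ≤ r) le_rfl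
      rw [hζr] at this
      exact this
    have hA2 : Real.cos (compAngle p (v s) (γ T)) ≤ Real.cos (compAngle p (v s) (ζ s)) :=
      Real.cos_le_cos_of_nonneg_of_le_pi (compAngle_nonneg _ _ _) (compAngle_le_pi _ _ _) hA1
    -- A3 : cos(comp (v s) (ζ s)) ≤ cos(comp (v s) (σ s)) + ε
    have hA3 : Real.cos (compAngle p (v s) (ζ s))
        ≤ Real.cos (compAngle p (v s) (σ s)) + ε := by
      have hc1 := cos_compAngle p (v s) (ζ s) hxpos hζpos
      have hc2 := cos_compAngle p (v s) (σ s) hxpos hσpos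
      rw [hdvs, hdζs] at hc1
      rw [hdvs, hdσs] at hc2
      have hDd : dist (v s) (σ s) ≤ dist (v s) (ζ s) + dist (σ s) (ζ s) := by
        have := dist_triangle (v s) (ζ s) (σ s)
        rw [dist_comm (ζ s) (σ s)] at this
        exact this
      have hDle : dist (v s) (ζ s) ≤ 2 * s := by
        have := dist_triangle (v s) p (ζ s)
        rw [dist_comm (v s) p] at this
        linarith [hdvs, hdζs]
      have hdle : dist (v s) (σ s) ≤ 2 * s := by
        have := dist_triangle (v s) p (σ s)
        rw [dist_comm (v s) p] at this
        linarith [hdvs, hdσs]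
      have hkey := A3_aux hs hwnn hε hε1 hDd hDle hdle hw dist_nonneg dist_nonneg
      rw [hc1, hc2, ← sub_le_iff_le_add', div_sub_div_same,
        div_le_iff₀ (by positivity : (0:ℝ) < 2 * s * s)]
      have e : s ^ 2 + s ^ 2 - dist (v s) (ζ s) ^ 2
          - (s ^ 2 + s ^ 2 - dist (v s) (σ s) ^ 2)
          = dist (v s) (σ s) ^ 2 - dist (v s) (ζ s) ^ 2 := by ring
      rw [e]
      exact hkey
    -- A4 : cos(comp (v s) (σ s)) ≤ cos(angleAt p σ v)
    have hA4 : Real.cos (compAngle p (v s) (σ s)) ≤ Real.cos (angleAt p σ v) := by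
      have hαle : angleAt p σ v ≤ compAngle p (σ s) (v s) := by
        apply angleAt_le_compAngle hX (L := s) (L' := ℓ) ?_ hσ0 hvd hv0 hs le_rfl hs hsℓ
        intro a b ha hb
        exact hσ ha.1 hb.1
      rw [compAngle_comm p (v s) (σ s)]
      exact Real.cos_le_cos_of_nonneg_of_le_pi (angleAt_nonneg p σ v)
        (compAngle_le_pi p (σ s) (v s)) hαle
    -- combine the angle estimates
    have hAngle : Real.cos (compAngle p (v s) (γ T)) ≤ Real.cos (angleAt p σ v) + ε := by
      linarith
    -- distance lower bound
    have hdist := dist_ge_cos p (v s) (γ T) hxpos hrγpos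
    rw [hdvs, ← hrdef] at hdist
    have hmul : s * Real.cos (compAngle p (v s) (γ T))
        ≤ s * (Real.cos (angleAt p σ v) + 2 * ε) := by
      apply mul_le_mul_of_nonneg_left ?_ hs.le
      linarith
    linarith
  -- conclude via the infimum
  apply le_busemann
  intro t ht
  rcases le_or_gt Tstar t with hle | hlt
  · exact hmain t hle
  · have h1 := busTerm_antitone hγ (v s) ht hlt.le
    linarith [hmain Tstar le_rfl]

end Lower

/-- Lemma 3.3(2): first variation formula for a Busemann function. -/
theorem stmt11 {X : Type*} [MetricSpace X] [CompleteSpace X] (hX : IsCAT0 X)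
    (γ : ℝ → X) (hγ : IsRay γ) (p : X)
    (σ : ℝ → X) (hσ : IsRay σ) (hσ0 : σ 0 = p) (hσγ : Asymp σ γ)
    (v : ℝ → X) (ℓ : ℝ) (hv : UnitGeodFrom p v ℓ) :
    Filter.Tendsto (fun s => (busemann γ (v s) - busemann γ p) / s)
      (nhdsWithin 0 (Set.Ioi 0))
      (nhds (-(Real.cos (angleAt p σ v)))) := by
  rw [Metric.tendsto_nhdsWithin_nhds]
  intro ε hε
  obtain ⟨δ₀, hδ₀, hub⟩ := upper_bound hX hγ hσ hσ0 hσγ hv (half_pos hε)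
  refine ⟨min δ₀ ℓ, lt_min hδ₀ hv.1, ?_⟩
  intro s hsIoi hsd
  have hs : 0 < s := hsIoi
  rw [Real.dist_eq, sub_zero, abs_of_pos hs] at hsd
  have hsℓ : s ≤ ℓ := le_of_lt (lt_of_lt_of_le hsd (min_le_right _ _))
  have hsδ : s < δ₀ := lt_of_lt_of_le hsd (min_le_left _ _)
  have hlow := lower_bound hX hγ hσ hσ0 hσγ hv hs hsℓ
  have hup := hub s hs hsδ
  rw [Real.dist_eq, abs_lt]
  constructor
  · have h1 : -Real.cos (angleAt p σ v) ≤ (busemann γ (v s) - busemann γ p) / s := by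
      rw [le_div_iff₀ hs]
      have := mul_comm s (Real.cos (angleAt p σ v))
      nlinarith [hlow]
    linarith
  · have h1 : (busemann γ (v s) - busemann γ p) / s
        ≤ -Real.cos (angleAt p σ v) + ε / 2 := by
      rw [div_le_iff₀ hs]
      nlinarith [hup]
    linarith
end
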